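/- Let G be a graph on vertex set V. Two tubes t, t' of G (connected induced subgraphs, identified with their vertex sets) are exchangeable in the nested complex of G if and only if t' has a unique neighbor v in t \ t' and t has a unique neighbor v' in t' \ t. (Here a vertex u is a neighbor of a tube s if u ∉ s and u is adjacent in G to some vertex of s.) -/

import Mathlib

open scoped Classical

variable {V : Type*} [Fintype V] [DecidableEq V]

/-- A tube of `G`: a nonempty vertex subset inducing a connected subgraph. -/
def IsTube (G : SimpleGraph V) (t : Finset V) : Prop :=
  t.Nonempty ∧ (G.induce (t : Set V)).Connected

/-- The set of all tubes of `G`. -/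
noncomputable def tubes (G : SimpleGraph V) : Finset (Finset V) :=
  Finset.univ.powerset.filter (fun t => IsTube G t)

/-- Compatibility of tubes: nested, or disjoint with non-tube union. -/
def Compatible (G : SimpleGraph V) (t t' : Finset V) : Prop :=
  t ⊆ t' ∨ t' ⊆ t ∨ (t ∩ t' = ∅ ∧ ¬ IsTube G (t ∪ t'))

/-- A tubing on `G`: pairwise compatible tubes containing all connected components
(that is, all inclusion-maximal tubes). -/
def IsTubing (G : SimpleGraph V) (T : Finset (Finset V)) : Prop :=
  (∀ t ∈ T, IsTube G t) ∧
  (∀ t ∈ T, ∀ t' ∈ T, Compatible G t t') ∧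
  (∀ K : Finset V, IsTube G K → (∀ t : Finset V, IsTube G t → K ⊆ t → K = t) → K ∈ T)

/-- A maximal tubing on `G`. -/
def IsMaxTubing (G : SimpleGraph V) (T : Finset (Finset V)) : Prop :=
  IsTubing G T ∧ ∀ T', IsTubing G T' → T ⊆ T' → T = T'

/-- Two tubes are exchangeable if two maximal tubings differ exactly by them. -/
def ExchangeableT (G : SimpleGraph V) (t t' : Finset V) : Prop :=
  t ≠ t' ∧ ∃ T T', IsMaxTubing G T ∧ IsMaxTubing G T' ∧ t ∈ T ∧ t' ∈ T' ∧
    T.erase t = T'.erase t'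

/-- `u` is a neighbor of the vertex set `s`: `u ∉ s` and `u` is adjacent to some vertex of `s`. -/
def NbrOf (G : SimpleGraph V) (s : Finset V) (u : V) : Prop :=
  u ∉ s ∧ ∃ x ∈ s, G.Adj u x

/-- Connected components of the induced subgraph on `U`:
inclusion-maximal tubes contained in `U`. -/
noncomputable def gccSet (G : SimpleGraph V) (U : Finset V) : Finset (Finset V) :=
  (tubes G).filter (fun K => K ⊆ U ∧ ∀ C : Finset V, IsTube G C → C ⊆ U → K ⊆ C → K = C)

/-- Characteristic vector of a subset of `V` in `ℝ^V`. -/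
def chi (S : Finset V) : V → ℝ := fun v => if v ∈ S then 1 else 0

/-- `w` is a non-disconnecting vertex of the set `s`. -/
def NonDisc (G : SimpleGraph V) (s : Finset V) (w : V) : Prop :=
  w ∈ s ∧ (s.erase w = ∅ ∨ IsTube G (s.erase w))

set_option linter.unusedSectionVars false
set_option maxHeartbeats 1000000

theorem tube_iff_walk (G : SimpleGraph V) (s : Finset V) :
    IsTube G s ↔ s.Nonempty ∧ ∀ x ∈ s, ∀ y ∈ s, ∃ w : G.Walk x y, ∀ z ∈ w.support, z ∈ s := by
  constructor
  · rintro ⟨hne, hc⟩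
    refine ⟨hne, fun x hx y hy => ?_⟩
    obtain ⟨w⟩ := hc.preconnected ⟨x, by simpa using hx⟩ ⟨y, by simpa using hy⟩
    refine ⟨w.map (SimpleGraph.Embedding.induce (s : Set V)).toHom, fun z hz => ?_⟩
    erw [SimpleGraph.Walk.support_map] at hz
    obtain ⟨⟨z', hz'⟩, _, rfl⟩ := List.mem_map.mp hz
    simpa using hz'
  · rintro ⟨hne, h⟩
    obtain ⟨x, hx⟩ := hne
    refine ⟨⟨x, hx⟩, ?_⟩
    apply SimpleGraph.induce_connected_of_patches x (by simpa using hx)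
    intro v hv
    obtain ⟨w, hw⟩ := h x hx v (by simpa using hv)
    refine ⟨{z | z ∈ w.support}, fun z hz => by simpa using hw z hz, w.start_mem_support,
      w.end_mem_support, ?_⟩
    have := w.connected_induce_support
    exact this.preconnected _ _

theorem tube_singleton (G : SimpleGraph V) (x : V) : IsTube G {x} := by
  rw [tube_iff_walk]
  refine ⟨⟨x, Finset.mem_singleton_self x⟩, ?_⟩
  intro a ha b hb
  rw [Finset.mem_singleton] at ha hb
  subst ha; subst hb
  exact ⟨SimpleGraph.Walk.nil, by simp⟩

theorem tube_nonempty {G : SimpleGraph V} {s : Finset V} (h : IsTube G s) : s.Nonempty := h.1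

/-- crossing lemma for walks -/
theorem walk_cross {G : SimpleGraph V} {a b : Finset V} {x y : V} (w : G.Walk x y)
    (hsup : ∀ z ∈ w.support, z ∈ a ∪ b) (hx : x ∈ a) (hy : y ∈ b)
    (hd : ∀ z, z ∈ a → z ∈ b → False) :
    ∃ u ∈ a, ∃ v ∈ b, G.Adj u v := by
  induction w with
  | nil => exact absurd hy (fun h => hd _ hx h)
  | @cons p q r h w ih =>
    have hq : q ∈ a ∪ b := hsup q (by simp)
    rcases Finset.mem_union.mp hq with hqa | hqb
    · exact ih (fun z hz => hsup z (by simp [hz, SimpleGraph.Walk.support_cons])) hqa hy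
    · exact ⟨p, hx, q, hqb, h⟩

/-- a tube has an edge across any proper nonempty cut -/
theorem exists_cross_edge {G : SimpleGraph V} {s a : Finset V} (hs : IsTube G s)
    (hsub : a ⊆ s) (hne : a.Nonempty) (hne' : (s \ a).Nonempty) :
    ∃ u ∈ a, ∃ v ∈ s \ a, G.Adj u v := by
  obtain ⟨x, hx⟩ := hne
  obtain ⟨y, hy⟩ := hne'
  obtain ⟨-, h⟩ := (tube_iff_walk G s).mp hs
  obtain ⟨w, hw⟩ := h x (hsub hx) y (Finset.mem_sdiff.mp hy).1
  refine walk_cross w (fun z hz => ?_) hx hy (fun z hz hz' => (Finset.mem_sdiff.mp hz').2 hz)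
  have := hw z hz
  by_cases hza : z ∈ a
  · exact Finset.mem_union_left _ hza
  · exact Finset.mem_union_right _ (Finset.mem_sdiff.mpr ⟨this, hza⟩)

theorem not_tube_sep {G : SimpleGraph V} {a b : Finset V} (ha : a.Nonempty) (hb : b.Nonempty)
    (hd : ∀ z, z ∈ a → z ∈ b → False) (hadj : ∀ u ∈ a, ∀ v ∈ b, ¬ G.Adj u v) :
    ¬ IsTube G (a ∪ b) := by
  intro ht
  have hba : (a ∪ b) \ a = b := by
    ext z
    simp only [Finset.mem_sdiff, Finset.mem_union]
    constructor
    · rintro ⟨h1 | h1, h2⟩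
      · exact absurd h1 h2
      · exact h1
    · intro h
      exact ⟨Or.inr h, fun h' => hd z h' h⟩
  obtain ⟨u, hu, v, hv, hadj'⟩ := exists_cross_edge ht (Finset.subset_union_left) ha
    (by rw [hba]; exact hb)
  rw [hba] at hv
  exact hadj u hu v hv hadj'

theorem tube_union_of_inter {G : SimpleGraph V} {s t : Finset V} (hs : IsTube G s)
    (ht : IsTube G t) (h : (s ∩ t).Nonempty) : IsTube G (s ∪ t) := by
  refine ⟨hs.1.mono Finset.subset_union_left, ?_⟩
  rw [Finset.coe_union]
  exact SimpleGraph.induce_union_connected hs.2.preconnected ht.2.preconnected (by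
    obtain ⟨x, hx⟩ := h
    exact ⟨x, by simpa using Finset.mem_inter.mp hx⟩)

theorem tube_union_of_adj {G : SimpleGraph V} {s t : Finset V} (hs : IsTube G s)
    (ht : IsTube G t) {u v : V} (hu : u ∈ s) (hv : v ∈ t) (h : G.Adj u v) :
    IsTube G (s ∪ t) := by
  refine ⟨hs.1.mono Finset.subset_union_left, ?_⟩
  rw [Finset.coe_union]
  have h1 : (G.induce ((s : Set V) ∪ {u, v})).Connected :=
    SimpleGraph.induce_union_connected hs.2.preconnected
      (SimpleGraph.induce_pair_connected_of_adj h).preconnected ⟨u, by simpa using hu⟩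
  have h2 := SimpleGraph.induce_union_connected h1.preconnected ht.2.preconnected
    ⟨v, by simpa using hv⟩
  have he : ((s : Set V) ∪ {u, v}) ∪ (t : Set V) = (s : Set V) ∪ t := by
    ext z
    simp only [Set.mem_union, Set.mem_insert_iff, Set.mem_singleton_iff, Finset.mem_coe]
    constructor
    · rintro ((hz | rfl | rfl) | hz) <;> tauto
    · tauto
  rw [← he]
  exact h2

/-- a connected set inside a disjoint non-adjacent union lies in one side -/
theorem tube_subset_of_sep {G : SimpleGraph V} {b a₁ a₂ : Finset V} (hb : IsTube G b)
    (hsub : b ⊆ a₁ ∪ a₂) (hd : ∀ z, z ∈ a₁ → z ∈ a₂ → False)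
    (hadj : ∀ u ∈ a₁, ∀ v ∈ a₂, ¬ G.Adj u v) : b ⊆ a₁ ∨ b ⊆ a₂ := by
  by_contra hcon
  push_neg at hcon
  obtain ⟨h1, h2⟩ := hcon
  have hb1 : (b ∩ a₁).Nonempty := by
    obtain ⟨y, hy⟩ := Finset.not_subset.mp h2
    rcases Finset.mem_union.mp (hsub hy.1) with h | h
    · exact ⟨y, Finset.mem_inter.mpr ⟨hy.1, h⟩⟩
    · exact absurd h hy.2
  have hb2 : (b \ (b ∩ a₁)).Nonempty := by
    obtain ⟨y, hy⟩ := Finset.not_subset.mp h1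
    refine ⟨y, Finset.mem_sdiff.mpr ⟨hy.1, fun h => hy.2 (Finset.mem_inter.mp h).2⟩⟩
  obtain ⟨u, hu, v, hv, hadj'⟩ := exists_cross_edge hb Finset.inter_subset_left hb1 hb2
  rw [Finset.mem_sdiff] at hv
  have hu1 : u ∈ a₁ := (Finset.mem_inter.mp hu).2
  have hv2 : v ∈ a₂ := by
    rcases Finset.mem_union.mp (hsub hv.1) with h | h
    · exact absurd (Finset.mem_inter.mpr ⟨hv.1, h⟩) hv.2
    · exact h
  exact hadj u hu1 v hv2 hadj'

theorem compatible_refl (G : SimpleGraph V) (t : Finset V) : Compatible G t t :=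
  Or.inl (Finset.Subset.refl t)

theorem compatible_symm {G : SimpleGraph V} {t t' : Finset V} (h : Compatible G t t') :
    Compatible G t' t := by
  rcases h with h | h | ⟨h1, h2⟩
  · exact Or.inr (Or.inl h)
  · exact Or.inl h
  · exact Or.inr (Or.inr ⟨by rwa [Finset.inter_comm], by rwa [Finset.union_comm]⟩)

theorem finset_disj_of_eq_empty {a b : Finset V} (h : a ∩ b = ∅) :
    ∀ z, z ∈ a → z ∈ b → False := by
  intro z hz hz'
  have : z ∈ a ∩ b := Finset.mem_inter.mpr ⟨hz, hz'⟩
  rw [h] at this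
  exact absurd this (Finset.notMem_empty z)

/-- eliminator for compatibility of two tubes -/
theorem compat_cases {G : SimpleGraph V} {s t : Finset V} (hs : IsTube G s) (ht : IsTube G t)
    (h : Compatible G s t) :
    s ⊆ t ∨ t ⊆ s ∨ ((∀ z, z ∈ s → z ∈ t → False) ∧ ∀ u ∈ s, ∀ v ∈ t, ¬ G.Adj u v) := by
  rcases h with h | h | ⟨h1, h2⟩
  · exact Or.inl h
  · exact Or.inr (Or.inl h)
  · refine Or.inr (Or.inr ⟨finset_disj_of_eq_empty h1, fun u hu v hv hadj => ?_⟩)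
    exact h2 (tube_union_of_adj hs ht hu hv hadj)

/-- builder for compatibility from disjoint non-adjacent -/
theorem compat_of_sep {G : SimpleGraph V} {s t : Finset V} (hs : s.Nonempty) (ht : t.Nonempty)
    (hd : ∀ z, z ∈ s → z ∈ t → False) (hadj : ∀ u ∈ s, ∀ v ∈ t, ¬ G.Adj u v) :
    Compatible G s t := by
  refine Or.inr (Or.inr ⟨Finset.eq_empty_of_forall_notMem fun z hz => ?_, ?_⟩)
  · obtain ⟨h1, h2⟩ := Finset.mem_inter.mp hz
    exact hd z h1 h2
  · exact not_tube_sep hs ht hd hadj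

/-- connected components of the induced subgraph on X, as maximal tubes inside X -/
noncomputable def comps (G : SimpleGraph V) (X : Finset V) : Finset (Finset V) :=
  X.powerset.filter (fun Y => IsTube G Y ∧ ∀ C : Finset V, IsTube G C → C ⊆ X → Y ⊆ C → Y = C)

theorem mem_comps_iff {G : SimpleGraph V} {X Y : Finset V} :
    Y ∈ comps G X ↔ Y ⊆ X ∧ IsTube G Y ∧ ∀ C : Finset V, IsTube G C → C ⊆ X → Y ⊆ C → Y = C := by
  simp [comps, Finset.mem_filter, Finset.mem_powerset, and_assoc]

theorem exists_comp {G : SimpleGraph V} {b X : Finset V} (hb : IsTube G b) (hbX : b ⊆ X) :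
    ∃ Y ∈ comps G X, b ⊆ Y := by
  set F := X.powerset.filter (fun C => IsTube G C ∧ b ⊆ C) with hF
  have hne : F.Nonempty := ⟨b, by simp [hF, Finset.mem_filter, Finset.mem_powerset, hb, hbX]⟩
  obtain ⟨Y, hYF, hmax⟩ := F.exists_max_image Finset.card hne
  rw [hF, Finset.mem_filter, Finset.mem_powerset] at hYF
  refine ⟨Y, mem_comps_iff.mpr ⟨hYF.1, hYF.2.1, fun C hC hCX hYC => ?_⟩, hYF.2.2⟩
  have hCF : C ∈ F := by
    rw [hF, Finset.mem_filter, Finset.mem_powerset]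
    exact ⟨hCX, hC, hYF.2.2.trans hYC⟩
  exact Finset.eq_of_subset_of_card_le hYC (hmax C hCF)

theorem comps_cover {G : SimpleGraph V} {X : Finset V} {x : V} (hx : x ∈ X) :
    ∃ Y ∈ comps G X, x ∈ Y := by
  obtain ⟨Y, hY, hsub⟩ := exists_comp (tube_singleton G x) (Finset.singleton_subset_iff.mpr hx)
  exact ⟨Y, hY, hsub (Finset.mem_singleton_self x)⟩

theorem comps_tube {G : SimpleGraph V} {X Y : Finset V} (h : Y ∈ comps G X) : IsTube G Y :=
  (mem_comps_iff.mp h).2.1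

theorem comps_subset {G : SimpleGraph V} {X Y : Finset V} (h : Y ∈ comps G X) : Y ⊆ X :=
  (mem_comps_iff.mp h).1

theorem tube_subset_comp {G : SimpleGraph V} {X Y b : Finset V} (hY : Y ∈ comps G X)
    (hb : IsTube G b) (hbX : b ⊆ X) (h : (b ∩ Y).Nonempty) : b ⊆ Y := by
  obtain ⟨hYX, hYt, hYmax⟩ := mem_comps_iff.mp hY
  have hu : IsTube G (Y ∪ b) := tube_union_of_inter hYt hb (by
    obtain ⟨x, hx⟩ := h
    rw [Finset.mem_inter] at hx
    exact ⟨x, Finset.mem_inter.mpr ⟨hx.2, hx.1⟩⟩)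
  have := hYmax (Y ∪ b) hu (Finset.union_subset hYX hbX) Finset.subset_union_left
  rw [this]
  exact Finset.subset_union_right

theorem comps_disjoint {G : SimpleGraph V} {X Y Y' : Finset V} (hY : Y ∈ comps G X)
    (hY' : Y' ∈ comps G X) (hne : Y ≠ Y') : ∀ z, z ∈ Y → z ∈ Y' → False := by
  intro z hz hz'
  have : Y ⊆ Y' := tube_subset_comp hY' (comps_tube hY) (comps_subset hY) ⟨z, Finset.mem_inter.mpr ⟨hz, hz'⟩⟩
  have : Y' ⊆ Y := tube_subset_comp hY (comps_tube hY') (comps_subset hY') ⟨z, Finset.mem_inter.mpr ⟨hz', hz⟩⟩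
  exact hne (Finset.Subset.antisymm ‹Y ⊆ Y'› this)

theorem comps_nonadj {G : SimpleGraph V} {X Y Y' : Finset V} (hY : Y ∈ comps G X)
    (hY' : Y' ∈ comps G X) (hne : Y ≠ Y') : ∀ u ∈ Y, ∀ v ∈ Y', ¬ G.Adj u v := by
  intro u hu v hv hadj
  have hun : IsTube G (Y ∪ Y') := tube_union_of_adj (comps_tube hY) (comps_tube hY') hu hv hadj
  have h1 := (mem_comps_iff.mp hY).2.2 (Y ∪ Y') hun
    (Finset.union_subset (comps_subset hY) (comps_subset hY')) Finset.subset_union_left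
  have h2 := (mem_comps_iff.mp hY').2.2 (Y ∪ Y') hun
    (Finset.union_subset (comps_subset hY) (comps_subset hY')) Finset.subset_union_right
  exact hne (h1.trans h2.symm)

theorem comps_compatible {G : SimpleGraph V} {X Y Y' : Finset V} (hY : Y ∈ comps G X)
    (hY' : Y' ∈ comps G X) : Compatible G Y Y' := by
  by_cases hne : Y = Y'
  · subst hne; exact compatible_refl G Y
  · exact compat_of_sep (comps_tube hY).1 (comps_tube hY').1 (comps_disjoint hY hY' hne)
      (comps_nonadj hY hY' hne)

/-- the comps of X partition X -/
theorem comps_sum_card {G : SimpleGraph V} (X : Finset V) :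
    ∑ Y ∈ comps G X, Y.card = X.card := by
  rw [← Finset.card_biUnion]
  · congr 1
    apply Finset.Subset.antisymm
    · intro x hx
      rw [Finset.mem_biUnion] at hx
      obtain ⟨Y, hY, hxY⟩ := hx
      exact comps_subset hY hxY
    · intro x hx
      rw [Finset.mem_biUnion]
      obtain ⟨Y, hY, hxY⟩ := comps_cover hx
      exact ⟨Y, hY, hxY⟩
  · intro Y hY Y' hY' hne
    rw [Function.onFun_apply, Finset.disjoint_left]
    intro z hz hz'
    exact comps_disjoint hY hY' hne z hz hz'

/-- maximal tubes (i.e. members of comps G univ) belong to every tubing -/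
theorem comp_univ_mem_tubing {G : SimpleGraph V} {T : Finset (Finset V)} (hT : IsTubing G T)
    {Y : Finset V} (hY : Y ∈ comps G Finset.univ) : Y ∈ T := by
  refine hT.2.2 Y (comps_tube hY) (fun C hC hYC => ?_)
  exact (mem_comps_iff.mp hY).2.2 C hC (Finset.subset_univ C) hYC

/-- the free vertices of s relative to the family T -/
noncomputable def lam (T : Finset (Finset V)) (s : Finset V) : Finset V :=
  s.filter (fun x => ∀ s' ∈ T, s' ⊂ s → x ∉ s')

theorem mem_lam_iff {T : Finset (Finset V)} {s : Finset V} {x : V} :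
    x ∈ lam T s ↔ x ∈ s ∧ ∀ s' ∈ T, s' ⊂ s → x ∉ s' := by
  simp [lam, Finset.mem_filter]

theorem lam_nonempty {G : SimpleGraph V} {T : Finset (Finset V)}
    (hT1 : ∀ t ∈ T, IsTube G t) (hT2 : ∀ t ∈ T, ∀ t' ∈ T, Compatible G t t')
    {s : Finset V} (hs : s ∈ T) : (lam T s).Nonempty := by
  by_contra hcon
  rw [Finset.not_nonempty_iff_eq_empty] at hcon
  have hcov : ∀ x ∈ s, ∃ s' ∈ T, s' ⊂ s ∧ x ∈ s' := by
    intro x hx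
    by_contra h
    push_neg at h
    have : x ∈ lam T s := mem_lam_iff.mpr ⟨hx, fun s' hs' hsub hxs' => h s' hs' hsub hxs'⟩
    rw [hcon] at this
    exact absurd this (Finset.notMem_empty x)
  -- maximal proper subtubes
  have hM : ∀ x ∈ s, ∃ m ∈ T, m ⊂ s ∧ x ∈ m ∧ ∀ d ∈ T, d ⊂ s → m ⊆ d → m = d := by
    intro x hx
    obtain ⟨s', hs'T, hs's, hxs'⟩ := hcov x hx
    set F := T.filter (fun d => d ⊂ s ∧ s' ⊆ d) with hF
    have hne : F.Nonempty := ⟨s', by simp [hF, Finset.mem_filter, hs'T, hs's]⟩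
    obtain ⟨m, hmF, hmax⟩ := F.exists_max_image Finset.card hne
    rw [hF, Finset.mem_filter] at hmF
    refine ⟨m, hmF.1, hmF.2.1, hmF.2.2 hxs', fun d hd hds hmd => ?_⟩
    refine Finset.eq_of_subset_of_card_le hmd (hmax d ?_)
    rw [hF, Finset.mem_filter]
    exact ⟨hd, hds, hmF.2.2.trans hmd⟩
  obtain ⟨x₀, hx₀⟩ := (hT1 s hs).1
  obtain ⟨m₁, hm₁T, hm₁s, hxm₁, hm₁max⟩ := hM x₀ hx₀
  have hdiff : (s \ m₁).Nonempty := by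
    obtain ⟨z, hz1, hz2⟩ := Finset.exists_of_ssubset hm₁s
    exact ⟨z, Finset.mem_sdiff.mpr ⟨hz1, hz2⟩⟩
  obtain ⟨u, hu, v, hv, hadj⟩ := exists_cross_edge (hT1 s hs) hm₁s.subset (hT1 m₁ hm₁T).1 hdiff
  rw [Finset.mem_sdiff] at hv
  obtain ⟨m₂, hm₂T, hm₂s, hvm₂, hm₂max⟩ := hM v hv.1
  have hne12 : m₁ ≠ m₂ := fun h => hv.2 (h ▸ hvm₂)
  rcases compat_cases (hT1 m₁ hm₁T) (hT1 m₂ hm₂T) (hT2 m₁ hm₁T m₂ hm₂T) with h | h | ⟨hd, hna⟩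
  · exact hne12 (hm₁max m₂ hm₂T hm₂s h)
  · exact hne12 (hm₂max m₁ hm₁T hm₁s h).symm
  · exact hna u hu v hvm₂ hadj

theorem lam_disjoint {G : SimpleGraph V} {T : Finset (Finset V)}
    (hT2 : ∀ t ∈ T, ∀ t' ∈ T, Compatible G t t') {s s' : Finset V} (hs : s ∈ T) (hs' : s' ∈ T)
    (hne : s ≠ s') {x : V} (hx : x ∈ lam T s) (hx' : x ∈ lam T s') : False := by
  rw [mem_lam_iff] at hx hx'
  rcases hT2 s hs s' hs' with h | h | ⟨h1, _⟩
  · exact hx'.2 s hs (Finset.ssubset_iff_subset_ne.mpr ⟨h, hne⟩) hx.1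
  · exact hx.2 s' hs' (Finset.ssubset_iff_subset_ne.mpr ⟨h, hne.symm⟩) hx'.1
  · exact finset_disj_of_eq_empty h1 x hx.1 hx'.1

theorem tubing_card_le {G : SimpleGraph V} {T : Finset (Finset V)} (hT : IsTubing G T) :
    T.card ≤ Fintype.card V := by
  have hch : ∀ s ∈ T, ∃ x, x ∈ lam T s := fun s hs => lam_nonempty hT.1 hT.2.1 hs
  choose f hf using hch
  rw [← Finset.card_univ]
  classical
  have hTc : T.card = T.attach.card := Finset.card_attach.symm
  rw [hTc]
  apply Finset.card_le_card_of_injOn (fun s => f s.1 s.2)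
  · intro s _; exact Finset.mem_univ _
  · intro s hs s' hs' heq
    by_contra hne
    have hne' : s.1 ≠ s'.1 := fun h => hne (Subtype.ext h)
    have h1 : f s.1 s.2 ∈ lam T s.1 := hf s.1 s.2
    have h2 : f s'.1 s'.2 ∈ lam T s'.1 := hf s'.1 s'.2
    simp only at heq
    rw [heq] at h1
    exact lam_disjoint hT.2.1 s.2 s'.2 hne' h1 h2

theorem tubing_max_of_card {G : SimpleGraph V} {T : Finset (Finset V)} (hT : IsTubing G T)
    (hcard : T.card = Fintype.card V) : IsMaxTubing G T := by
  refine ⟨hT, fun T' hT' hsub => ?_⟩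
  exact (Finset.eq_of_subset_of_card_le hsub (by rw [hcard]; exact tubing_card_le hT')).symm ▸ rfl

theorem lam_subsingleton_of_max {G : SimpleGraph V} {T : Finset (Finset V)}
    (hmax : IsMaxTubing G T) {s : Finset V} (hs : s ∈ T) {x y : V}
    (hx : x ∈ lam T s) (hy : y ∈ lam T s) : x = y := by
  by_contra hne
  obtain ⟨hT, hTmax⟩ := hmax
  rw [mem_lam_iff] at hx hy
  -- the component K of s.erase x containing y
  have hy' : y ∈ s.erase x := Finset.mem_erase.mpr ⟨fun h => hne h.symm, hy.1⟩
  obtain ⟨K, hK, hyK⟩ := comps_cover (G := G) hy'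
  have hKtube : IsTube G K := comps_tube hK
  have hKsub : K ⊆ s.erase x := comps_subset hK
  have hKs : K ⊂ s := Finset.ssubset_iff_subset_ne.mpr
    ⟨hKsub.trans (Finset.erase_subset x s), fun h =>
      (Finset.mem_erase.mp ((h ▸ hKsub) hx.1)).1 rfl⟩
  have hKnotT : K ∉ T := fun hKT => hy.2 K hKT hKs hyK
  -- show insert K T is a tubing
  have htubing : IsTubing G (insert K T) := by
    refine ⟨?_, ?_, ?_⟩
    · intro a ha
      rcases Finset.mem_insert.mp ha with h | h
      · exact h ▸ hKtube
      · exact hT.1 a h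
    · have key : ∀ a ∈ T, Compatible G K a := by
        intro a haT
        rcases compat_cases (hT.1 s hs) (hT.1 a haT) (hT.2.1 s hs a haT) with h | h | ⟨hd, hna⟩
        · -- s ⊆ a
          exact Or.inl (hKs.subset.trans h)
        · -- a ⊆ s
          by_cases heq : a = s
          · exact Or.inl (heq ▸ hKs.subset)
          · have has : a ⊂ s := Finset.ssubset_iff_subset_ne.mpr ⟨h, heq⟩
            have hxa : x ∉ a := hx.2 a haT has
            have hasub : a ⊆ s.erase x := fun z hz =>
              Finset.mem_erase.mpr ⟨fun hzx => hxa (hzx ▸ hz), has.subset hz⟩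
            by_cases hmeet : (a ∩ K).Nonempty
            · exact Or.inr (Or.inl (tube_subset_comp hK (hT.1 a haT) hasub hmeet))
            · -- a is inside some other component, disjoint and nonadjacent from K
              obtain ⟨Y', hY', haY'⟩ := exists_comp (hT.1 a haT) hasub
              have hYK : Y' ≠ K := by
                rintro rfl
                obtain ⟨z, hz⟩ := (hT.1 a haT).1
                exact hmeet ⟨z, Finset.mem_inter.mpr ⟨hz, haY' hz⟩⟩
              refine compat_of_sep hKtube.1 (hT.1 a haT).1 ?_ ?_
              · intro z hzK hza
                exact comps_disjoint hK hY' hYK.symm z hzK (haY' hza)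
              · intro u hu v hv hadj
                exact comps_nonadj hK hY' hYK.symm u hu v (haY' hv) hadj
        · -- s disjoint from a
          refine compat_of_sep hKtube.1 (hT.1 a haT).1 ?_ ?_
          · intro z hzK hza
            exact hd z (hKs.subset hzK) hza
          · intro u hu v hv hadj
            exact hna u (hKs.subset hu) v hv hadj
      intro a ha b hb
      rcases Finset.mem_insert.mp ha with h | h <;> rcases Finset.mem_insert.mp hb with h' | h'
      · rw [h, h']; exact compatible_refl G K
      · rw [h]; exact key b h'
      · rw [h']; exact compatible_symm (key a h)
      · exact hT.2.1 a h b h'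
    · intro K' hK' hK'max
      exact Finset.mem_insert_of_mem (hT.2.2 K' hK' hK'max)
  have := hTmax (insert K T) htubing (Finset.subset_insert K T)
  exact hKnotT (this ▸ Finset.mem_insert_self K T)

theorem lam_eq_singleton_of_max {G : SimpleGraph V} {T : Finset (Finset V)}
    (hmax : IsMaxTubing G T) {s : Finset V} (hs : s ∈ T) : ∃ v, lam T s = {v} := by
  obtain ⟨v, hv⟩ := lam_nonempty hmax.1.1 hmax.1.2.1 hs
  refine ⟨v, Finset.eq_singleton_iff_unique_mem.mpr ⟨hv, fun w hw =>
    lam_subsingleton_of_max hmax hs hw hv⟩⟩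

theorem not_compat_unfold {G : SimpleGraph V} {t t' : Finset V} (h : ¬ Compatible G t t') :
    ¬ t ⊆ t' ∧ ¬ t' ⊆ t ∧ (t ∩ t' = ∅ → IsTube G (t ∪ t')) := by
  unfold Compatible at h
  push_neg at h
  exact h

theorem mem_other {T T' : Finset (Finset V)} {t t' s : Finset V}
    (he : T.erase t = T'.erase t') (hs : s ∈ T) (hns : s ≠ t) : s ∈ T' := by
  have : s ∈ T.erase t := Finset.mem_erase.mpr ⟨hns, hs⟩
  rw [he] at this
  exact Finset.mem_of_mem_erase this

theorem exists_minover {G : SimpleGraph V} {T T' : Finset (Finset V)} {t t' : Finset V}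
    (hmT : IsMaxTubing G T) (hmT' : IsMaxTubing G T') (htT : t ∈ T) (ht'T' : t' ∈ T')
    (hne : t ≠ t') (he : T.erase t = T'.erase t') (hinc : ¬ Compatible G t t') :
    ∃ tb, tb ∈ T ∧ tb ∈ T' ∧ t ⊂ tb ∧ t' ⊂ tb ∧ (∀ s ∈ T, t ⊂ s → tb.card ≤ s.card) := by
  have ht : IsTube G t := hmT.1.1 t htT
  have ht' : IsTube G t' := hmT'.1.1 t' ht'T'
  have htnotT' : t ∉ T' := by
    intro h
    have : t ∈ T'.erase t' := Finset.mem_erase.mpr ⟨hne, h⟩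
    rw [← he] at this
    exact (Finset.mem_erase.mp this).1 rfl
  -- t is not a maximal tube
  have hnotmax : ∃ C, IsTube G C ∧ t ⊆ C ∧ t ≠ C := by
    by_contra h
    push_neg at h
    exact htnotT' (hmT'.1.2.2 t ht (fun C hC hsub => h C hC hsub))
  obtain ⟨C, hC, htC, htneC⟩ := hnotmax
  obtain ⟨Y, hY, hCY⟩ := exists_comp hC (Finset.subset_univ C)
  have hYT : Y ∈ T := comp_univ_mem_tubing hmT.1 hY
  have htY : t ⊂ Y := (Finset.ssubset_iff_subset_ne.mpr ⟨htC, htneC⟩).trans_subset hCY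
  set P := T.filter (fun s => t ⊂ s) with hP
  have hPne : P.Nonempty := ⟨Y, by simp [hP, Finset.mem_filter, hYT, htY]⟩
  obtain ⟨tb, htbP, hmin⟩ := P.exists_min_image Finset.card hPne
  rw [hP, Finset.mem_filter] at htbP
  obtain ⟨htbT, httb⟩ := htbP
  have hminP : ∀ s ∈ T, t ⊂ s → tb.card ≤ s.card := by
    intro s hsT hts
    exact hmin s (by rw [hP, Finset.mem_filter]; exact ⟨hsT, hts⟩)
  have htbT' : tb ∈ T' := mem_other he htbT (fun h => (lt_irrefl t) (h ▸ httb))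
  refine ⟨tb, htbT, htbT', httb, ?_, hminP⟩
  -- t' ⊂ tb
  have htb : IsTube G tb := hmT.1.1 tb htbT
  obtain ⟨hd1, hd2, hd3⟩ := not_compat_unfold hinc
  rcases compat_cases ht' htb (hmT'.1.2.1 t' ht'T' tb htbT') with h | h | ⟨hd, hna⟩
  · refine Finset.ssubset_iff_subset_ne.mpr ⟨h, fun heq => ?_⟩
    exact hd1 (heq ▸ httb).subset
  · exact absurd (httb.subset.trans h) hd1
  · exfalso
    have hdtt' : t ∩ t' = ∅ := by
      apply Finset.eq_empty_of_forall_notMem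
      intro z hz
      rw [Finset.mem_inter] at hz
      exact hd z hz.2 (httb.subset hz.1)
    have htt' : IsTube G (t ∪ t') := hd3 hdtt'
    have hne' : ((t ∪ t') \ t).Nonempty := by
      obtain ⟨y, hy⟩ := Finset.not_subset.mp hd2
      exact ⟨y, Finset.mem_sdiff.mpr ⟨Finset.mem_union_right _ hy.1, hy.2⟩⟩
    obtain ⟨u, hu, y, hy, hadj⟩ := exists_cross_edge htt' Finset.subset_union_left ht.1 hne'
    rw [Finset.mem_sdiff] at hy
    have hyt' : y ∈ t' := by
      rcases Finset.mem_union.mp hy.1 with h | h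
      · exact absurd h hy.2
      · exact h
    exact hna y hyt' u (httb.subset hu) hadj.symm

theorem forward_half {G : SimpleGraph V} {T T' : Finset (Finset V)} {t t' : Finset V}
    (hmT : IsMaxTubing G T) (hmT' : IsMaxTubing G T') (htT : t ∈ T) (ht'T' : t' ∈ T')
    (hne : t ≠ t') (he : T.erase t = T'.erase t') :
    ∃! w, w ∈ t' \ t ∧ NbrOf G t w := by
  have ht : IsTube G t := hmT.1.1 t htT
  have ht' : IsTube G t' := hmT'.1.1 t' ht'T'
  have ht'notT : t' ∉ T := by
    intro h
    have : t' ∈ T.erase t := Finset.mem_erase.mpr ⟨hne.symm, h⟩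
    rw [he] at this
    exact (Finset.mem_erase.mp this).1 rfl
  -- t and t' are incompatible
  have hinc : ¬ Compatible G t t' := by
    intro hc
    have htubing : IsTubing G (insert t' T) := by
      refine ⟨?_, ?_, ?_⟩
      · intro a ha
        rcases Finset.mem_insert.mp ha with h | h
        · exact h ▸ ht'
        · exact hmT.1.1 a h
      · have key : ∀ a ∈ T, Compatible G t' a := by
          intro a haT
          by_cases hat : a = t
          · exact hat ▸ compatible_symm hc
          · have haT' : a ∈ T' := mem_other he haT hat
            exact hmT'.1.2.1 t' ht'T' a haT'
        intro a ha b hb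
        rcases Finset.mem_insert.mp ha with h | h <;> rcases Finset.mem_insert.mp hb with h' | h'
        · rw [h, h']; exact compatible_refl G t'
        · rw [h]; exact key b h'
        · rw [h']; exact compatible_symm (key a h)
        · exact hmT.1.2.1 a h b h'
      · intro K hK hKmax
        exact Finset.mem_insert_of_mem (hmT.1.2.2 K hK hKmax)
    have := hmT.2 (insert t' T) htubing (Finset.subset_insert t' T)
    exact ht'notT (this ▸ Finset.mem_insert_self t' T)
  have hinc' : ¬ Compatible G t' t := fun h => hinc (compatible_symm h)
  obtain ⟨hd1, hd2, hd3⟩ := not_compat_unfold hinc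
  -- minimal common covers
  obtain ⟨tb, htbT, htbT', httb, ht'tb, hminT⟩ :=
    exists_minover hmT hmT' htT ht'T' hne he hinc
  obtain ⟨tb2, htb2T', htb2T, ht'tb2, httb2, hminT'⟩ :=
    exists_minover hmT' hmT ht'T' htT hne.symm he.symm hinc'
  have htbeq : tb = tb2 := by
    have h1 : tb2.card ≤ tb.card := hminT' tb htbT' ht'tb
    have h2 : tb.card ≤ tb2.card := hminT tb2 htb2T httb2
    rcases compat_cases (hmT.1.1 tb htbT) (hmT.1.1 tb2 htb2T)
      (hmT.1.2.1 tb htbT tb2 htb2T) with h | h | ⟨hd, _⟩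
    · exact Finset.eq_of_subset_of_card_le h h1
    · exact (Finset.eq_of_subset_of_card_le h h2).symm
    · exfalso
      obtain ⟨z, hz⟩ := ht.1
      exact hd z (httb.subset hz) (httb2.subset hz)
  subst htbeq
  have htb : IsTube G tb := hmT.1.1 tb htbT
  obtain ⟨v', hv'⟩ := lam_eq_singleton_of_max hmT htbT
  obtain ⟨v, hv⟩ := lam_eq_singleton_of_max hmT' htbT'
  -- structure of proper subtubes of tb
  have step5T : ∀ s ∈ T, s ⊂ tb →
      s ⊆ t ∨ ((∀ z, z ∈ s → z ∈ t → False) ∧ ∀ u ∈ s, ∀ w ∈ t, ¬ G.Adj u w) := by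
    intro s hsT hstb
    rcases compat_cases (hmT.1.1 s hsT) ht (hmT.1.2.1 s hsT t htT) with h | h | ⟨hd, hna⟩
    · exact Or.inl h
    · by_cases hst : s = t
      · exact Or.inl (hst ▸ Finset.Subset.refl s)
      · exfalso
        have : t ⊂ s := Finset.ssubset_iff_subset_ne.mpr ⟨h, fun hh => hst hh.symm⟩
        exact absurd (hminT s hsT this) (not_le.mpr (Finset.card_lt_card hstb))
    · exact Or.inr ⟨hd, hna⟩
  have step5T' : ∀ s ∈ T', s ⊂ tb →
      s ⊆ t' ∨ ((∀ z, z ∈ s → z ∈ t' → False) ∧ ∀ u ∈ s, ∀ w ∈ t', ¬ G.Adj u w) := by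
    intro s hsT' hstb
    rcases compat_cases (hmT'.1.1 s hsT') ht' (hmT'.1.2.1 s hsT' t' ht'T') with h | h | ⟨hd, hna⟩
    · exact Or.inl h
    · by_cases hst : s = t'
      · exact Or.inl (hst ▸ Finset.Subset.refl s)
      · exfalso
        have : t' ⊂ s := Finset.ssubset_iff_subset_ne.mpr ⟨h, fun hh => hst hh.symm⟩
        exact absurd (hminT' s hsT' this) (not_le.mpr (Finset.card_lt_card hstb))
    · exact Or.inr ⟨hd, hna⟩
  -- the star lemmas
  have star : ∀ x ∈ tb, x ∉ t → x ≠ v' → ∀ u ∈ t, ¬ G.Adj x u := by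
    intro x hx hxt hxv' u hu hadj
    have hxlam : x ∉ lam T tb := by
      rw [hv']
      exact fun h => hxv' (Finset.mem_singleton.mp h)
    rw [mem_lam_iff] at hxlam
    push_neg at hxlam
    obtain ⟨s, hsT, hstb, hxs⟩ := hxlam hx
    rcases step5T s hsT hstb with h | ⟨hd, hna⟩
    · exact hxt (h hxs)
    · exact hna x hxs u hu hadj
  have star' : ∀ x ∈ tb, x ∉ t' → x ≠ v → ∀ u ∈ t', ¬ G.Adj x u := by
    intro x hx hxt hxv u hu hadj
    have hxlam : x ∉ lam T' tb := by
      rw [hv]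
      exact fun h => hxv (Finset.mem_singleton.mp h)
    rw [mem_lam_iff] at hxlam
    push_neg at hxlam
    obtain ⟨s, hsT', hstb, hxs⟩ := hxlam hx
    rcases step5T' s hsT' hstb with h | ⟨hd, hna⟩
    · exact hxt (h hxs)
    · exact hna x hxs u hu hadj
  -- basic facts about v' and v
  have hv'mem : v' ∈ lam T tb := by rw [hv']; exact Finset.mem_singleton_self v'
  have hvmem : v ∈ lam T' tb := by rw [hv]; exact Finset.mem_singleton_self v
  rw [mem_lam_iff] at hv'mem hvmem
  have hv'nt : v' ∉ t := hv'mem.2 t htT httb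
  have hvnt' : v ∉ t' := hvmem.2 t' ht'T' ht'tb
  -- v' is adjacent to t
  have hv'adj : ∃ u ∈ t, G.Adj v' u := by
    have hne' : (tb \ t).Nonempty := by
      obtain ⟨z, hz1, hz2⟩ := Finset.exists_of_ssubset httb
      exact ⟨z, Finset.mem_sdiff.mpr ⟨hz1, hz2⟩⟩
    obtain ⟨u, hu, y, hy, hadj⟩ := exists_cross_edge htb httb.subset ht.1 hne'
    rw [Finset.mem_sdiff] at hy
    by_cases hyv : y = v'
    · exact ⟨u, hu, (hyv ▸ hadj).symm⟩
    · exact absurd hadj.symm (star y hy.1 hy.2 hyv u hu)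
  -- v' belongs to t'
  have hv't' : v' ∈ t' := by
    by_contra hno
    have hv'v : v' = v := by
      by_contra hvv
      have : v' ∉ lam T' tb := by
        rw [hv]
        exact fun h => hvv (Finset.mem_singleton.mp h)
      rw [mem_lam_iff] at this
      push_neg at this
      obtain ⟨s, hsT', hstb, hv's⟩ := this hv'mem.1
      have hst' : s ≠ t' := fun h => hno (h ▸ hv's)
      have hsT : s ∈ T := mem_other he.symm hsT' hst'
      exact hv'mem.2 s hsT hstb hv's
    subst hv'v
    -- now derive a contradiction using star'
    by_cases hcase : (t ∩ t').Nonempty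
    · -- t becomes disconnected
      have ha2 : (t \ t').Nonempty := by
        obtain ⟨z, hz⟩ := Finset.not_subset.mp hd1
        exact ⟨z, Finset.mem_sdiff.mpr ⟨hz.1, hz.2⟩⟩
      have hsep : ¬ IsTube G ((t ∩ t') ∪ (t \ t')) := by
        apply not_tube_sep hcase ha2
        · intro z hz hz'
          exact (Finset.mem_sdiff.mp hz').2 (Finset.mem_inter.mp hz).2
        · intro u hu w hw hadj
          rw [Finset.mem_inter] at hu
          rw [Finset.mem_sdiff] at hw
          have hwtb : w ∈ tb := httb.subset hw.1
          have hwv : w ≠ v' := fun h => hv'nt (h ▸ hw.1)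
          exact star' w hwtb hw.2 hwv u hu.2 hadj.symm
      have hrw : (t ∩ t' ∪ t \ t') = t := sup_inf_sdiff t t'
      rw [hrw] at hsep
      exact hsep ht
    · have hdtt' : t ∩ t' = ∅ := Finset.not_nonempty_iff_eq_empty.mp hcase
      have htt' : IsTube G (t ∪ t') := hd3 hdtt'
      have hne' : ((t ∪ t') \ t).Nonempty := by
        obtain ⟨y, hy⟩ := Finset.not_subset.mp hd2
        exact ⟨y, Finset.mem_sdiff.mpr ⟨Finset.mem_union_right _ hy.1, hy.2⟩⟩
      obtain ⟨u, hu, y, hy, hadj⟩ := exists_cross_edge htt' Finset.subset_union_left ht.1 hne'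
      rw [Finset.mem_sdiff] at hy
      have hyt' : y ∈ t' := by
        rcases Finset.mem_union.mp hy.1 with h | h
        · exact absurd h hy.2
        · exact h
      have hunt' : u ∉ t' := fun hcon => finset_disj_of_eq_empty hdtt' u hu hcon
      exact star' u (httb.subset hu) hunt' (fun h => hv'nt (h ▸ hu)) y hyt' hadj
  -- conclusion
  obtain ⟨u₀, hu₀, hadj₀⟩ := hv'adj
  refine ⟨v', ⟨Finset.mem_sdiff.mpr ⟨hv't', hv'nt⟩, hv'nt, u₀, hu₀, hadj₀⟩, ?_⟩
  rintro w ⟨hw, hwnt, x, hx, hadjw⟩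
  rw [Finset.mem_sdiff] at hw
  by_contra hwv
  exact star w (ht'tb.subset hw.1) hw.2 hwv x hx hadjw

/-- a fully-packed compatible family of tubes inside X, of size |X| -/
theorem pack (G : SimpleGraph V) : ∀ n (X : Finset V), X.card ≤ n →
    ∃ B : Finset (Finset V), (∀ b ∈ B, IsTube G b ∧ b ⊆ X) ∧
      (∀ b ∈ B, ∀ b' ∈ B, Compatible G b b') ∧ B.card = X.card := by
  intro n
  induction n with
  | zero =>
    intro X hX
    have : X.card = 0 := Nat.le_zero.mp hX
    exact ⟨∅, fun b hb => absurd hb (Finset.notMem_empty b),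
      fun b hb => absurd hb (Finset.notMem_empty b), by simp [this]⟩
  | succ n ih =>
    intro X hX
    have key : ∀ Y ∈ comps G X, ∃ y, y ∈ Y ∧ ∃ BY : Finset (Finset V),
        (∀ b ∈ BY, IsTube G b ∧ b ⊆ Y.erase y) ∧
        (∀ b ∈ BY, ∀ b' ∈ BY, Compatible G b b') ∧ BY.card = (Y.erase y).card := by
      intro Y hY
      obtain ⟨y, hy⟩ := (comps_tube hY).1
      have hle : (Y.erase y).card ≤ n := by
        have h1 : Y.card ≤ X.card := Finset.card_le_card (comps_subset hY)
        have h2 : (Y.erase y).card = Y.card - 1 := Finset.card_erase_of_mem hy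
        omega
      obtain ⟨BY, hB1, hB2, hB3⟩ := ih (Y.erase y) hle
      exact ⟨y, hy, BY, hB1, hB2, hB3⟩
    choose y hyY BY hB1 hB2 hB3 using key
    refine ⟨comps G X ∪ (comps G X).attach.biUnion (fun Y => BY Y.1 Y.2), ?_, ?_, ?_⟩
    · intro b hb
      rcases Finset.mem_union.mp hb with h | h
      · exact ⟨comps_tube h, comps_subset h⟩
      · rw [Finset.mem_biUnion] at h
        obtain ⟨Y, hY, hbY⟩ := h
        exact ⟨(hB1 Y.1 Y.2 b hbY).1,
          ((hB1 Y.1 Y.2 b hbY).2.trans (Finset.erase_subset _ _)).trans (comps_subset Y.2)⟩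
    · -- compatibility
      have hsub : ∀ (Y : Finset V) (hY : Y ∈ comps G X), ∀ b ∈ BY Y hY, b ⊆ Y :=
        fun Y hY b hb => (hB1 Y hY b hb).2.trans (Finset.erase_subset _ _)
      have hcc : ∀ b b', (∃ (Y : Finset V) (hY : Y ∈ comps G X), b ∈ BY Y hY) →
          b' ∈ comps G X → Compatible G b b' := by
        rintro b b' ⟨Y, hY, hb⟩ hb'
        by_cases hYY : Y = b'
        · exact Or.inl (hYY ▸ hsub Y hY b hb)
        · refine compat_of_sep (hB1 Y hY b hb).1.1 (comps_tube hb').1 ?_ ?_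
          · intro z hz hz'
            exact comps_disjoint hY hb' hYY z (hsub Y hY b hb hz) hz'
          · intro u hu w hw
            exact comps_nonadj hY hb' hYY u (hsub Y hY b hb hu) w hw
      intro b hb b' hb'
      rcases Finset.mem_union.mp hb with h | h <;> rcases Finset.mem_union.mp hb' with h' | h'
      · exact comps_compatible h h'
      · rw [Finset.mem_biUnion] at h'
        obtain ⟨Y, hY, hbY⟩ := h'
        exact compatible_symm (hcc b' b ⟨Y.1, Y.2, hbY⟩ h)
      · rw [Finset.mem_biUnion] at h
        obtain ⟨Y, hY, hbY⟩ := h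
        exact hcc b b' ⟨Y.1, Y.2, hbY⟩ h'
      · rw [Finset.mem_biUnion] at h h'
        obtain ⟨Y, hY, hbY⟩ := h
        obtain ⟨Y', hY', hbY'⟩ := h'
        by_cases hYY : Y.1 = Y'.1
        · have : Y = Y' := Subtype.ext hYY
          subst this
          exact hB2 Y.1 Y.2 b hbY b' hbY'
        · refine compat_of_sep (hB1 Y.1 Y.2 b hbY).1.1 (hB1 Y'.1 Y'.2 b' hbY').1.1 ?_ ?_
          · intro z hz hz'
            exact comps_disjoint Y.2 Y'.2 hYY z (hsub Y.1 Y.2 b hbY hz) (hsub Y'.1 Y'.2 b' hbY' hz')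
          · intro u hu w hw
            exact comps_nonadj Y.2 Y'.2 hYY u (hsub Y.1 Y.2 b hbY hu) w (hsub Y'.1 Y'.2 b' hbY' hw)
    · -- cardinality
      have hdisjfam : ∀ (Y : Finset V) (hY : Y ∈ comps G X), ∀ b ∈ BY Y hY, b ∉ comps G X := by
        intro Y hY b hb hbc
        have hbY : b ⊆ Y.erase (y Y hY) := (hB1 Y hY b hb).2
        obtain ⟨z, hz⟩ := (hB1 Y hY b hb).1.1
        by_cases hbeq : b = Y
        · rw [hbeq] at hbY
          exact (Finset.mem_erase.mp (hbY (hyY Y hY))).1 rfl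
        · exact comps_disjoint hbc hY hbeq z hz (Finset.mem_of_mem_erase (hbY hz))
      rw [Finset.card_union_of_disjoint, Finset.card_biUnion]
      · have hsum : ∑ Y ∈ (comps G X).attach, (BY Y.1 Y.2).card
            = ∑ Y ∈ (comps G X).attach, (Y.1.card - 1) := by
          apply Finset.sum_congr rfl
          intro Y _
          rw [hB3 Y.1 Y.2, Finset.card_erase_of_mem (hyY Y.1 Y.2)]
        rw [hsum]
        have hcards : (comps G X).card + ∑ Y ∈ (comps G X).attach, (Y.1.card - 1) = X.card := by
          rw [← comps_sum_card (G := G) X, ← Finset.card_attach (s := comps G X),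
            ← Finset.sum_attach (comps G X) Finset.card]
          rw [Finset.card_eq_sum_ones ((comps G X).attach), ← Finset.sum_add_distrib]
          apply Finset.sum_congr rfl
          intro Y _
          have : 1 ≤ Y.1.card := Finset.card_pos.mpr (comps_tube Y.2).1
          omega
        exact hcards
      · intro Y _ Y' _ hYY
        rw [Function.onFun_apply, Finset.disjoint_left]
        intro b hb hb'
        obtain ⟨z, hz⟩ := (hB1 Y.1 Y.2 b hb).1.1
        have h1 : z ∈ Y.1 := Finset.mem_of_mem_erase ((hB1 Y.1 Y.2 b hb).2 hz)
        have h2 : z ∈ Y'.1 := Finset.mem_of_mem_erase ((hB1 Y'.1 Y'.2 b hb').2 hz)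
        exact comps_disjoint Y.2 Y'.2 (fun h => hYY (Subtype.ext h)) z h1 h2
      · rw [Finset.disjoint_left]
        intro b hb hb'
        rw [Finset.mem_biUnion] at hb'
        obtain ⟨Y, hY, hbY⟩ := hb'
        exact hdisjfam Y.1 Y.2 b hbY hb

/-- a fully-packed compatible family around a tube W inside X: tubes either contain W
or are disjoint/non-adjacent from it, nothing strictly inside W -/
theorem packAround (G : SimpleGraph V) (W : Finset V) (hW : IsTube G W) :
    ∀ n (X : Finset V), W ⊆ X → X.card ≤ n →
    ∃ A : Finset (Finset V),
      (∀ a ∈ A, IsTube G a ∧ a ⊆ X) ∧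
      (∀ a ∈ A, W ⊆ a ∨ ((∀ z, z ∈ a → z ∈ W → False) ∧ ∀ u ∈ a, ∀ w ∈ W, ¬ G.Adj u w)) ∧
      (∀ a ∈ A, ∀ a' ∈ A, Compatible G a a') ∧ W ∈ A ∧ comps G X ⊆ A ∧
      A.card = X.card - W.card + 1 := by
  intro n
  induction n with
  | zero =>
    intro X hWX hX
    obtain ⟨z, hz⟩ := hW.1
    have hX0 : X = ∅ := Finset.card_eq_zero.mp (Nat.le_zero.mp hX)
    exact absurd (hX0 ▸ hWX hz) (Finset.notMem_empty z)
  | succ n ih =>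
    intro X hWX hX
    obtain ⟨Y₀, hY₀, hWY₀⟩ := exists_comp hW hWX
    -- pack the other components
    have key : ∀ Y ∈ (comps G X).erase Y₀, ∃ y, y ∈ Y ∧ ∃ BY : Finset (Finset V),
        (∀ b ∈ BY, IsTube G b ∧ b ⊆ Y.erase y) ∧
        (∀ b ∈ BY, ∀ b' ∈ BY, Compatible G b b') ∧ BY.card = (Y.erase y).card := by
      intro Y hY
      have hY' : Y ∈ comps G X := Finset.mem_of_mem_erase hY
      obtain ⟨y, hy⟩ := (comps_tube hY').1
      have hle : (Y.erase y).card ≤ n := by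
        have h1 : Y.card ≤ X.card := Finset.card_le_card (comps_subset hY')
        have h2 : (Y.erase y).card = Y.card - 1 := Finset.card_erase_of_mem hy
        omega
      obtain ⟨BY, hB1, hB2, hB3⟩ := pack G n (Y.erase y) hle
      exact ⟨y, hy, BY, hB1, hB2, hB3⟩
    choose y hyY BY hB1 hB2 hB3 using key
    set inner := ((comps G X).erase Y₀).attach.biUnion (fun Y => BY Y.1 Y.2) with hinner
    have hinner_sub : ∀ b ∈ inner, ∃ Y, (Y ∈ (comps G X).erase Y₀) ∧ b ⊆ Y ∧ IsTube G b := by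
      intro b hb
      rw [hinner, Finset.mem_biUnion] at hb
      obtain ⟨Y, hY, hbY⟩ := hb
      exact ⟨Y.1, Y.2, (hB1 Y.1 Y.2 b hbY).2.trans (Finset.erase_subset _ _),
        (hB1 Y.1 Y.2 b hbY).1⟩
    -- the part at/around W in Y₀
    by_cases hWeq : W = Y₀
    · -- W is itself a component of X
      refine ⟨comps G X ∪ inner, ?_, ?_, ?_, ?_, ?_, ?_⟩
      · intro a ha
        rcases Finset.mem_union.mp ha with h | h
        · exact ⟨comps_tube h, comps_subset h⟩
        · obtain ⟨Y, hY, hbY, hb⟩ := hinner_sub a h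
          exact ⟨hb, hbY.trans (comps_subset (Finset.mem_of_mem_erase hY))⟩
      · intro a ha
        rcases Finset.mem_union.mp ha with h | h
        · by_cases haY : a = Y₀
          · exact Or.inl (hWeq ▸ haY ▸ Finset.Subset.refl a)
          · refine Or.inr ⟨fun z hz hz' => comps_disjoint h hY₀ haY z hz (hWY₀ hz'), ?_⟩
            intro u hu w hw
            exact comps_nonadj h hY₀ haY u hu w (hWY₀ hw)
        · obtain ⟨Y, hY, hbY, hb⟩ := hinner_sub a h
          obtain ⟨hYne, hYc⟩ := Finset.mem_erase.mp hY
          refine Or.inr ⟨fun z hz hz' => comps_disjoint hYc hY₀ hYne z (hbY hz) (hWY₀ hz'), ?_⟩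
          intro u hu w hw
          exact comps_nonadj hYc hY₀ hYne u (hbY hu) w (hWY₀ hw)
      · intro a ha a' ha'
        rcases Finset.mem_union.mp ha with h | h <;> rcases Finset.mem_union.mp ha' with h' | h'
        · exact comps_compatible h h'
        · obtain ⟨Y, hY, hbY, hb⟩ := hinner_sub a' h'
          have hYc := Finset.mem_of_mem_erase hY
          by_cases haY : a = Y
          · exact Or.inr (Or.inl (haY ▸ hbY))
          · exact compat_of_sep (comps_tube h).1 hb.1
              (fun z hz hz' => comps_disjoint h hYc haY z hz (hbY hz'))
              (fun u hu w hw => comps_nonadj h hYc haY u hu w (hbY hw))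
        · obtain ⟨Y, hY, hbY, hb⟩ := hinner_sub a h
          have hYc := Finset.mem_of_mem_erase hY
          by_cases haY : a' = Y
          · exact Or.inl (haY ▸ hbY)
          · exact compat_of_sep hb.1 (comps_tube h').1
              (fun z hz hz' => comps_disjoint hYc h' (fun hh => haY hh.symm) z (hbY hz) hz')
              (fun u hu w hw => comps_nonadj hYc h' (fun hh => haY hh.symm) u (hbY hu) w hw)
        · rw [hinner, Finset.mem_biUnion] at h h'
          obtain ⟨Y, hY, hbY⟩ := h
          obtain ⟨Y', hY', hbY'⟩ := h'
          by_cases hYY : Y.1 = Y'.1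
          · have : Y = Y' := Subtype.ext hYY
            subst this
            exact hB2 Y.1 Y.2 a hbY a' hbY'
          · have hs1 : a ⊆ Y.1 := (hB1 Y.1 Y.2 a hbY).2.trans (Finset.erase_subset _ _)
            have hs2 : a' ⊆ Y'.1 := (hB1 Y'.1 Y'.2 a' hbY').2.trans (Finset.erase_subset _ _)
            have hc1 := Finset.mem_of_mem_erase Y.2
            have hc2 := Finset.mem_of_mem_erase Y'.2
            exact compat_of_sep (hB1 Y.1 Y.2 a hbY).1.1 (hB1 Y'.1 Y'.2 a' hbY').1.1
              (fun z hz hz' => comps_disjoint hc1 hc2 hYY z (hs1 hz) (hs2 hz'))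
              (fun u hu w hw => comps_nonadj hc1 hc2 hYY u (hs1 hu) w (hs2 hw))
      · exact Finset.mem_union_left _ (hWeq ▸ hY₀)
      · exact Finset.subset_union_left
      · -- cardinality
        have hdisj : Disjoint (comps G X) inner := by
          rw [Finset.disjoint_left]
          intro b hb hb'
          rw [hinner, Finset.mem_biUnion] at hb'
          obtain ⟨Y, hY, hbY⟩ := hb'
          have hYc := Finset.mem_of_mem_erase Y.2
          have hbsub : b ⊆ Y.1.erase (y Y.1 Y.2) := (hB1 Y.1 Y.2 b hbY).2
          obtain ⟨z, hz⟩ := (hB1 Y.1 Y.2 b hbY).1.1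
          by_cases hbeq : b = Y.1
          · rw [hbeq] at hbsub
            exact (Finset.mem_erase.mp (hbsub (hyY Y.1 Y.2))).1 rfl
          · exact comps_disjoint hb hYc hbeq z hz (Finset.mem_of_mem_erase (hbsub hz))
        rw [Finset.card_union_of_disjoint hdisj, hinner, Finset.card_biUnion]
        · have hsum : ∑ Y ∈ ((comps G X).erase Y₀).attach, (BY Y.1 Y.2).card
              = ∑ Y ∈ ((comps G X).erase Y₀).attach, (Y.1.card - 1) := by
            apply Finset.sum_congr rfl
            intro Y _
            rw [hB3 Y.1 Y.2, Finset.card_erase_of_mem (hyY Y.1 Y.2)]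
          rw [hsum]
          have h1 : ∑ Y ∈ ((comps G X).erase Y₀).attach, (Y.1.card - 1)
              = (∑ Y ∈ (comps G X).erase Y₀, Y.card) - ((comps G X).erase Y₀).card := by
            rw [← Finset.sum_attach ((comps G X).erase Y₀) Finset.card]
            have : ∀ Y ∈ ((comps G X).erase Y₀).attach, 1 ≤ Y.1.card :=
              fun Y _ => Finset.card_pos.mpr (comps_tube (Finset.mem_of_mem_erase Y.2)).1
            rw [← Finset.card_attach (s := (comps G X).erase Y₀)]
            rw [Finset.card_eq_sum_ones (((comps G X).erase Y₀).attach)]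
            rw [eq_tsub_iff_add_eq_of_le, ← Finset.sum_add_distrib]
            · apply Finset.sum_congr rfl
              intro Y hY
              have := this Y hY
              omega
            · apply Finset.sum_le_sum this
          rw [h1]
          have h2 : ∑ Y ∈ (comps G X).erase Y₀, Y.card = X.card - Y₀.card := by
            have := comps_sum_card (G := G) X
            rw [← Finset.add_sum_erase _ _ hY₀] at this
            omega
          have h3 : Y₀.card ≤ X.card := Finset.card_le_card (comps_subset hY₀)
          have h4 : ((comps G X).erase Y₀).card = (comps G X).card - 1 :=
            Finset.card_erase_of_mem hY₀
          have h5 : 1 ≤ (comps G X).card := Finset.card_pos.mpr ⟨Y₀, hY₀⟩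
          have h6 : (comps G X).card - 1 ≤ ∑ Y ∈ (comps G X).erase Y₀, Y.card := by
            rw [← h4, Finset.card_eq_sum_ones ((comps G X).erase Y₀)]
            apply Finset.sum_le_sum
            intro Y hY
            exact Finset.card_pos.mpr (comps_tube (Finset.mem_of_mem_erase hY)).1
          have h7 : Y₀.card ≥ 1 := Finset.card_pos.mpr (comps_tube hY₀).1
          have h8 : ∑ Y ∈ (comps G X).erase Y₀, Y.card + Y₀.card = X.card := by
            have := comps_sum_card (G := G) X
            rw [← Finset.add_sum_erase _ _ hY₀] at this
            omega
          rw [← hWeq] at *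
          omega
        · intro Y _ Y' _ hYY
          rw [Function.onFun_apply, Finset.disjoint_left]
          intro b hb hb'
          obtain ⟨z, hz⟩ := (hB1 Y.1 Y.2 b hb).1.1
          have hz1 : z ∈ Y.1 := Finset.mem_of_mem_erase ((hB1 Y.1 Y.2 b hb).2 hz)
          have hz2 : z ∈ Y'.1 := Finset.mem_of_mem_erase ((hB1 Y'.1 Y'.2 b hb').2 hz)
          exact comps_disjoint (Finset.mem_of_mem_erase Y.2) (Finset.mem_of_mem_erase Y'.2)
            (fun h => hYY (Subtype.ext h)) z hz1 hz2
    · -- W is strictly inside its component Y₀; recurse on Y₀ minus a vertex outside W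
      have hWY₀' : W ⊂ Y₀ := Finset.ssubset_iff_subset_ne.mpr ⟨hWY₀, hWeq⟩
      obtain ⟨y₀, hy₀Y, hy₀W⟩ := Finset.exists_of_ssubset hWY₀'
      have hWX' : W ⊆ Y₀.erase y₀ := fun z hz =>
        Finset.mem_erase.mpr ⟨fun h => hy₀W (h ▸ hz), hWY₀ hz⟩
      have hX'le : (Y₀.erase y₀).card ≤ n := by
        have h1 : Y₀.card ≤ X.card := Finset.card_le_card (comps_subset hY₀)
        have h2 : (Y₀.erase y₀).card = Y₀.card - 1 := Finset.card_erase_of_mem hy₀Y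
        omega
      obtain ⟨A₀, hA₀1, hA₀2, hA₀3, hA₀W, hA₀c, hA₀card⟩ := ih (Y₀.erase y₀) hWX' hX'le
      have hA₀sub : ∀ a ∈ A₀, a ⊆ Y₀ := fun a ha =>
        (hA₀1 a ha).2.trans (Finset.erase_subset _ _)
      refine ⟨comps G X ∪ inner ∪ A₀, ?_, ?_, ?_, ?_, ?_, ?_⟩
      · intro a ha
        rcases Finset.mem_union.mp ha with h | h
        · rcases Finset.mem_union.mp h with h' | h'
          · exact ⟨comps_tube h', comps_subset h'⟩
          · obtain ⟨Y, hY, hbY, hb⟩ := hinner_sub a h'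
            exact ⟨hb, hbY.trans (comps_subset (Finset.mem_of_mem_erase hY))⟩
        · exact ⟨(hA₀1 a h).1, (hA₀sub a h).trans (comps_subset hY₀)⟩
      · intro a ha
        rcases Finset.mem_union.mp ha with h | h
        · rcases Finset.mem_union.mp h with h' | h'
          · by_cases haY : a = Y₀
            · exact Or.inl (haY ▸ hWY₀)
            · refine Or.inr ⟨fun z hz hz' => comps_disjoint h' hY₀ haY z hz (hWY₀ hz'), ?_⟩
              intro u hu w hw
              exact comps_nonadj h' hY₀ haY u hu w (hWY₀ hw)
          · obtain ⟨Y, hY, hbY, hb⟩ := hinner_sub a h'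
            obtain ⟨hYne, hYc⟩ := Finset.mem_erase.mp hY
            refine Or.inr ⟨fun z hz hz' => comps_disjoint hYc hY₀ hYne z (hbY hz) (hWY₀ hz'), ?_⟩
            intro u hu w hw
            exact comps_nonadj hYc hY₀ hYne u (hbY hu) w (hWY₀ hw)
        · exact hA₀2 a h
      · -- pairwise compatibility
        have hCI : ∀ a ∈ comps G X ∪ inner, ∀ a' ∈ comps G X ∪ inner, Compatible G a a' := by
          intro a ha a' ha'
          rcases Finset.mem_union.mp ha with h | h <;> rcases Finset.mem_union.mp ha' with h' | h'
          · exact comps_compatible h h'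
          · obtain ⟨Y, hY, hbY, hb⟩ := hinner_sub a' h'
            have hYc := Finset.mem_of_mem_erase hY
            by_cases haY : a = Y
            · exact Or.inr (Or.inl (haY ▸ hbY))
            · exact compat_of_sep (comps_tube h).1 hb.1
                (fun z hz hz' => comps_disjoint h hYc haY z hz (hbY hz'))
                (fun u hu w hw => comps_nonadj h hYc haY u hu w (hbY hw))
          · obtain ⟨Y, hY, hbY, hb⟩ := hinner_sub a h
            have hYc := Finset.mem_of_mem_erase hY
            by_cases haY : a' = Y
            · exact Or.inl (haY ▸ hbY)
            · exact compat_of_sep hb.1 (comps_tube h').1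
                (fun z hz hz' => comps_disjoint hYc h' (fun hh => haY hh.symm) z (hbY hz) hz')
                (fun u hu w hw => comps_nonadj hYc h' (fun hh => haY hh.symm) u (hbY hu) w hw)
          · rw [hinner, Finset.mem_biUnion] at h h'
            obtain ⟨Y, hY, hbY⟩ := h
            obtain ⟨Y', hY', hbY'⟩ := h'
            by_cases hYY : Y.1 = Y'.1
            · have : Y = Y' := Subtype.ext hYY
              subst this
              exact hB2 Y.1 Y.2 a hbY a' hbY'
            · have hs1 : a ⊆ Y.1 := (hB1 Y.1 Y.2 a hbY).2.trans (Finset.erase_subset _ _)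
              have hs2 : a' ⊆ Y'.1 := (hB1 Y'.1 Y'.2 a' hbY').2.trans (Finset.erase_subset _ _)
              have hc1 := Finset.mem_of_mem_erase Y.2
              have hc2 := Finset.mem_of_mem_erase Y'.2
              exact compat_of_sep (hB1 Y.1 Y.2 a hbY).1.1 (hB1 Y'.1 Y'.2 a' hbY').1.1
                (fun z hz hz' => comps_disjoint hc1 hc2 hYY z (hs1 hz) (hs2 hz'))
                (fun u hu w hw => comps_nonadj hc1 hc2 hYY u (hs1 hu) w (hs2 hw))
        have hCA : ∀ a ∈ comps G X ∪ inner, ∀ a' ∈ A₀, Compatible G a a' := by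
          intro a ha a' ha'
          have ha'Y₀ : a' ⊆ Y₀ := hA₀sub a' ha'
          rcases Finset.mem_union.mp ha with h | h
          · by_cases haY : a = Y₀
            · exact Or.inr (Or.inl (haY ▸ ha'Y₀))
            · exact compat_of_sep (comps_tube h).1 (hA₀1 a' ha').1.1
                (fun z hz hz' => comps_disjoint h hY₀ haY z hz (ha'Y₀ hz'))
                (fun u hu w hw => comps_nonadj h hY₀ haY u hu w (ha'Y₀ hw))
          · obtain ⟨Y, hY, hbY, hb⟩ := hinner_sub a h
            obtain ⟨hYne, hYc⟩ := Finset.mem_erase.mp hY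
            exact compat_of_sep hb.1 (hA₀1 a' ha').1.1
              (fun z hz hz' => comps_disjoint hYc hY₀ hYne z (hbY hz) (ha'Y₀ hz'))
              (fun u hu w hw => comps_nonadj hYc hY₀ hYne u (hbY hu) w (ha'Y₀ hw))
        intro a ha a' ha'
        rcases Finset.mem_union.mp ha with h | h <;> rcases Finset.mem_union.mp ha' with h' | h'
        · exact hCI a h a' h'
        · exact hCA a h a' h'
        · exact compatible_symm (hCA a' h' a h)
        · exact hA₀3 a h a' h'
      · exact Finset.mem_union_right _ hA₀W
      · exact fun Y hY => Finset.mem_union_left _ (Finset.mem_union_left _ hY)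
      · -- cardinality
        have hdisj1 : Disjoint (comps G X) inner := by
          rw [Finset.disjoint_left]
          intro b hb hb'
          rw [hinner, Finset.mem_biUnion] at hb'
          obtain ⟨Y, hY, hbY⟩ := hb'
          have hYc := Finset.mem_of_mem_erase Y.2
          have hbsub : b ⊆ Y.1.erase (y Y.1 Y.2) := (hB1 Y.1 Y.2 b hbY).2
          obtain ⟨z, hz⟩ := (hB1 Y.1 Y.2 b hbY).1.1
          by_cases hbeq : b = Y.1
          · rw [hbeq] at hbsub
            exact (Finset.mem_erase.mp (hbsub (hyY Y.1 Y.2))).1 rfl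
          · exact comps_disjoint hb hYc hbeq z hz (Finset.mem_of_mem_erase (hbsub hz))
        have hdisj2 : Disjoint (comps G X ∪ inner) A₀ := by
          rw [Finset.disjoint_left]
          intro b hb hb'
          have hbY₀' : b ⊆ Y₀.erase y₀ := (hA₀1 b hb').2
          obtain ⟨z, hz⟩ := (hA₀1 b hb').1.1
          rcases Finset.mem_union.mp hb with h | h
          · by_cases hbeq : b = Y₀
            · rw [hbeq] at hbY₀'
              exact (Finset.mem_erase.mp (hbY₀' hy₀Y)).1 rfl
            · exact comps_disjoint h hY₀ hbeq z hz (Finset.mem_of_mem_erase (hbY₀' hz))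
          · obtain ⟨Y, hY, hbY, _⟩ := hinner_sub b h
            obtain ⟨hYne, hYc⟩ := Finset.mem_erase.mp hY
            exact comps_disjoint hYc hY₀ hYne z (hbY hz) (Finset.mem_of_mem_erase (hbY₀' hz))
        rw [Finset.card_union_of_disjoint hdisj2, Finset.card_union_of_disjoint hdisj1,
          hinner, Finset.card_biUnion]
        · have hsum : ∑ Y ∈ ((comps G X).erase Y₀).attach, (BY Y.1 Y.2).card
              = ∑ Y ∈ ((comps G X).erase Y₀).attach, (Y.1.card - 1) := by
            apply Finset.sum_congr rfl
            intro Y _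
            rw [hB3 Y.1 Y.2, Finset.card_erase_of_mem (hyY Y.1 Y.2)]
          rw [hsum]
          have h1 : ∑ Y ∈ ((comps G X).erase Y₀).attach, (Y.1.card - 1)
              = (∑ Y ∈ (comps G X).erase Y₀, Y.card) - ((comps G X).erase Y₀).card := by
            rw [← Finset.sum_attach ((comps G X).erase Y₀) Finset.card]
            have hpos : ∀ Y ∈ ((comps G X).erase Y₀).attach, 1 ≤ Y.1.card :=
              fun Y _ => Finset.card_pos.mpr (comps_tube (Finset.mem_of_mem_erase Y.2)).1
            rw [← Finset.card_attach (s := (comps G X).erase Y₀)]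
            rw [Finset.card_eq_sum_ones (((comps G X).erase Y₀).attach)]
            rw [eq_tsub_iff_add_eq_of_le, ← Finset.sum_add_distrib]
            · apply Finset.sum_congr rfl
              intro Y hY
              have := hpos Y hY
              omega
            · apply Finset.sum_le_sum hpos
          rw [h1]
          have h4 : ((comps G X).erase Y₀).card = (comps G X).card - 1 :=
            Finset.card_erase_of_mem hY₀
          have h5 : 1 ≤ (comps G X).card := Finset.card_pos.mpr ⟨Y₀, hY₀⟩
          have h6 : (comps G X).card - 1 ≤ ∑ Y ∈ (comps G X).erase Y₀, Y.card := by
            rw [← h4, Finset.card_eq_sum_ones ((comps G X).erase Y₀)]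
            apply Finset.sum_le_sum
            intro Y hY
            exact Finset.card_pos.mpr (comps_tube (Finset.mem_of_mem_erase hY)).1
          have h7 : 1 ≤ Y₀.card := Finset.card_pos.mpr (comps_tube hY₀).1
          have h8 : ∑ Y ∈ (comps G X).erase Y₀, Y.card + Y₀.card = X.card := by
            have := comps_sum_card (G := G) X
            rw [← Finset.add_sum_erase _ _ hY₀] at this
            omega
          have h9 : (Y₀.erase y₀).card = Y₀.card - 1 := Finset.card_erase_of_mem hy₀Y
          have h10 : W.card ≤ (Y₀.erase y₀).card := Finset.card_le_card hWX'
          have h11 : 1 ≤ W.card := Finset.card_pos.mpr hW.1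
          omega
        · intro Y _ Y' _ hYY
          rw [Function.onFun_apply, Finset.disjoint_left]
          intro b hb hb'
          obtain ⟨z, hz⟩ := (hB1 Y.1 Y.2 b hb).1.1
          have hz1 : z ∈ Y.1 := Finset.mem_of_mem_erase ((hB1 Y.1 Y.2 b hb).2 hz)
          have hz2 : z ∈ Y'.1 := Finset.mem_of_mem_erase ((hB1 Y'.1 Y'.2 b hb').2 hz)
          exact comps_disjoint (Finset.mem_of_mem_erase Y.2) (Finset.mem_of_mem_erase Y'.2)
            (fun h => hYY (Subtype.ext h)) z hz1 hz2

theorem backward_dir {G : SimpleGraph V} {t t' : Finset V} (ht : IsTube G t) (ht' : IsTube G t')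
    (h1 : ∃! v, v ∈ t \ t' ∧ NbrOf G t' v) (h2 : ∃! v', v' ∈ t' \ t ∧ NbrOf G t v') :
    ExchangeableT G t t' := by
  obtain ⟨v, ⟨hvmem, hvnt', x₁, hx₁, hadj₁⟩, hvuniq⟩ := h1
  obtain ⟨v', ⟨hv'mem, hv'nt, x₂, hx₂, hadj₂⟩, hv'uniq⟩ := h2
  rw [Finset.mem_sdiff] at hvmem hv'mem
  have hvt : v ∈ t := hvmem.1
  have hv't' : v' ∈ t' := hv'mem.1
  have uvq : ∀ y, y ∈ t → y ∉ t' → (∃ x ∈ t', G.Adj y x) → y = v := by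
    intro y hy hy' hex
    exact hvuniq y ⟨Finset.mem_sdiff.mpr ⟨hy, hy'⟩, hy', hex⟩
  have uv'q : ∀ y, y ∈ t' → y ∉ t → (∃ x ∈ t, G.Adj y x) → y = v' := by
    intro y hy hy' hex
    exact hv'uniq y ⟨Finset.mem_sdiff.mpr ⟨hy, hy'⟩, hy', hex⟩
  set U := t ∪ t' with hU
  have htU : IsTube G U := tube_union_of_adj ht ht' hvt hx₁ hadj₁
  obtain ⟨A, hA1, hA2, hA3, hAU, hAcomps, hAcard⟩ :=
    packAround G U htU (Fintype.card V) Finset.univ (Finset.subset_univ U)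
      (le_of_eq Finset.card_univ)
  obtain ⟨B, hB1, hB2, hB3⟩ := pack G (Fintype.card V) (t.erase v)
    (Finset.card_le_univ _)
  obtain ⟨C, hC1, hC2, hC3⟩ := pack G (Fintype.card V) ((t' \ t).erase v')
    (Finset.card_le_univ _)
  set R := A ∪ B ∪ C with hR
  have hBsubt : ∀ b ∈ B, b ⊆ t := fun b hb => (hB1 b hb).2.trans (Finset.erase_subset _ _)
  have hCsubt' : ∀ c ∈ C, c ⊆ t' := fun c hc =>
    ((hC1 c hc).2.trans (Finset.erase_subset _ _)).trans (Finset.sdiff_subset)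
  have hCdisjt : ∀ c ∈ C, ∀ z ∈ c, z ∉ t := by
    intro c hc z hz
    exact (Finset.mem_sdiff.mp (Finset.mem_of_mem_erase ((hC1 c hc).2 hz))).2
  -- compatibility helpers
  have hBt : ∀ b ∈ B, Compatible G b t := fun b hb => Or.inl (hBsubt b hb)
  have hCt' : ∀ c ∈ C, Compatible G c t' := fun c hc => Or.inl (hCsubt' c hc)
  have hCt : ∀ c ∈ C, Compatible G c t := by
    intro c hc
    refine compat_of_sep (hC1 c hc).1.1 ht.1 (fun z hz hz' => hCdisjt c hc z hz hz') ?_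
    intro y hy u hu hadj
    have hy' : y ∈ (t' \ t).erase v' := (hC1 c hc).2 hy
    rw [Finset.mem_erase, Finset.mem_sdiff] at hy'
    exact hy'.1 (uv'q y hy'.2.1 hy'.2.2 ⟨u, hu, hadj⟩)
  have hBt' : ∀ b ∈ B, Compatible G b t' := by
    intro b hb
    have hcover : t.erase v ⊆ (t ∩ t') ∪ ((t \ t').erase v) := by
      intro z hz
      rw [Finset.mem_erase] at hz
      by_cases hzt' : z ∈ t'
      · exact Finset.mem_union_left _ (Finset.mem_inter.mpr ⟨hz.2, hzt'⟩)
      · exact Finset.mem_union_right _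
          (Finset.mem_erase.mpr ⟨hz.1, Finset.mem_sdiff.mpr ⟨hz.2, hzt'⟩⟩)
    have hdisj : ∀ z, z ∈ t ∩ t' → z ∈ (t \ t').erase v → False := by
      intro z hz hz'
      exact (Finset.mem_sdiff.mp (Finset.mem_of_mem_erase hz')).2 (Finset.mem_inter.mp hz).2
    have hnonadj : ∀ u ∈ t ∩ t', ∀ w ∈ (t \ t').erase v, ¬ G.Adj u w := by
      intro u hu w hw hadj
      rw [Finset.mem_erase, Finset.mem_sdiff] at hw
      exact hw.1 (uvq w hw.2.1 hw.2.2 ⟨u, (Finset.mem_inter.mp hu).2, hadj.symm⟩)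
    rcases tube_subset_of_sep (hB1 b hb).1 (((hB1 b hb).2).trans hcover) hdisj hnonadj
      with h | h
    · exact Or.inl (h.trans (Finset.inter_subset_right))
    · refine compat_of_sep (hB1 b hb).1.1 ht'.1 ?_ ?_
      · intro z hz hz'
        exact (Finset.mem_sdiff.mp (Finset.mem_of_mem_erase (h hz))).2 hz'
      · intro y hy w hw hadj
        have hy' := Finset.mem_erase.mp (h hy)
        rw [Finset.mem_sdiff] at hy'
        exact hy'.1 (uvq y hy'.2.1 hy'.2.2 ⟨w, hw, hadj⟩)
  have hBC : ∀ b ∈ B, ∀ c ∈ C, Compatible G b c := by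
    intro b hb c hc
    refine compat_of_sep (hB1 b hb).1.1 (hC1 c hc).1.1
      (fun z hz hz' => hCdisjt c hc z hz' (hBsubt b hb hz)) ?_
    intro u hu y hy hadj
    have hy' : y ∈ (t' \ t).erase v' := (hC1 c hc).2 hy
    rw [Finset.mem_erase, Finset.mem_sdiff] at hy'
    exact hy'.1 (uv'q y hy'.2.1 hy'.2.2 ⟨u, hBsubt b hb hu, hadj.symm⟩)
  have hAany : ∀ a ∈ A, ∀ s : Finset V, IsTube G s → s ⊆ U → Compatible G a s := by
    intro a ha s hs hsU
    rcases hA2 a ha with h | ⟨hdis, hna⟩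
    · exact Or.inr (Or.inl (hsU.trans h))
    · exact compat_of_sep (hA1 a ha).1.1 hs.1 (fun z hz hz' => hdis z hz (hsU hz'))
        (fun u hu w hw => hna u hu w (hsU hw))
  have hBU : ∀ b ∈ B, b ⊆ U := fun b hb => (hBsubt b hb).trans Finset.subset_union_left
  have hCU : ∀ c ∈ C, c ⊆ U := fun c hc => (hCsubt' c hc).trans Finset.subset_union_right
  -- R is pairwise compatible, and compatible with t and t'
  have hRtube : ∀ r ∈ R, IsTube G r := by
    intro r hr
    rcases Finset.mem_union.mp hr with h | h
    · rcases Finset.mem_union.mp h with h' | h'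
      · exact (hA1 r h').1
      · exact (hB1 r h').1
    · exact (hC1 r h).1
  have hRR : ∀ a ∈ R, ∀ a' ∈ R, Compatible G a a' := by
    intro a ha a' ha'
    rcases Finset.mem_union.mp ha with h | h <;> rcases Finset.mem_union.mp ha' with h' | h'
    · rcases Finset.mem_union.mp h with g | g <;> rcases Finset.mem_union.mp h' with g' | g'
      · exact hA3 a g a' g'
      · exact hAany a g a' (hB1 a' g').1 (hBU a' g')
      · exact compatible_symm (hAany a' g' a (hB1 a g).1 (hBU a g))
      · exact hB2 a g a' g'
    · rcases Finset.mem_union.mp h with g | g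
      · exact hAany a g a' (hC1 a' h').1 (hCU a' h')
      · exact hBC a g a' h'
    · rcases Finset.mem_union.mp h' with g | g
      · exact compatible_symm (hAany a' g a (hC1 a h).1 (hCU a h))
      · exact compatible_symm (hBC a' g a h)
    · exact hC2 a h a' h'
  have hRt : ∀ r ∈ R, Compatible G r t := by
    intro r hr
    rcases Finset.mem_union.mp hr with h | h
    · rcases Finset.mem_union.mp h with h' | h'
      · exact hAany r h' t ht Finset.subset_union_left
      · exact hBt r h'
    · exact hCt r h
  have hRt' : ∀ r ∈ R, Compatible G r t' := by
    intro r hr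
    rcases Finset.mem_union.mp hr with h | h
    · rcases Finset.mem_union.mp h with h' | h'
      · exact hAany r h' t' ht' Finset.subset_union_right
      · exact hBt' r h'
    · exact hCt' r h
  -- the two tubings
  have htubingT : ∀ s : Finset V, IsTube G s → (∀ r ∈ R, Compatible G r s) →
      IsTubing G (insert s R) := by
    intro s hs hcomp
    refine ⟨?_, ?_, ?_⟩
    · intro a ha
      rcases Finset.mem_insert.mp ha with h | h
      · exact h ▸ hs
      · exact hRtube a h
    · intro a ha a' ha'
      rcases Finset.mem_insert.mp ha with h | h <;> rcases Finset.mem_insert.mp ha' with h' | h'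
      · rw [h, h']; exact compatible_refl G s
      · rw [h]; exact compatible_symm (hcomp a' h')
      · rw [h']; exact hcomp a h
      · exact hRR a h a' h'
    · intro K hK hKmax
      have : K ∈ comps G Finset.univ := mem_comps_iff.mpr
        ⟨Finset.subset_univ K, hK, fun C hC _ hKC => hKmax C hC hKC⟩
      exact Finset.mem_insert_of_mem (Finset.mem_union_left _ (Finset.mem_union_left _
        (hAcomps this)))
  -- membership exclusions
  have htnotR : t ∉ R := by
    intro h
    rcases Finset.mem_union.mp h with h' | h'
    · rcases Finset.mem_union.mp h' with g | g
      · rcases hA2 t g with hsub | ⟨hdis, _⟩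
        · exact hv'nt (hsub (Finset.mem_union_right _ hv't'))
        · exact hdis v hvt (Finset.mem_union_left _ hvt)
      · exact (Finset.mem_erase.mp ((hB1 t g).2 hvt)).1 rfl
    · exact hCdisjt t h' v hvt hvt
  have ht'notR : t' ∉ R := by
    intro h
    rcases Finset.mem_union.mp h with h' | h'
    · rcases Finset.mem_union.mp h' with g | g
      · rcases hA2 t' g with hsub | ⟨hdis, _⟩
        · exact hvnt' (hsub (Finset.mem_union_left _ hvt))
        · exact hdis v' hv't' (Finset.mem_union_right _ hv't')
      · exact hv'nt (hBsubt t' g hv't')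
    · exact (Finset.mem_erase.mp ((hC1 t' h').2 hv't')).1 rfl
  -- cardinality of R
  have hABdisj : Disjoint A B := by
    rw [Finset.disjoint_left]
    intro b hb hb'
    rcases hA2 b hb with hsub | ⟨hdis, _⟩
    · exact (Finset.mem_erase.mp ((hB1 b hb').2 (hsub (Finset.mem_union_left _ hvt)))).1 rfl
    · obtain ⟨z, hz⟩ := (hB1 b hb').1.1
      exact hdis z hz (Finset.mem_union_left _ (hBsubt b hb' hz))
  have hACdisj : Disjoint A C := by
    rw [Finset.disjoint_left]
    intro c hc hc'
    rcases hA2 c hc with hsub | ⟨hdis, _⟩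
    · exact hCdisjt c hc' v (hsub (Finset.mem_union_left _ hvt)) hvt
    · obtain ⟨z, hz⟩ := (hC1 c hc').1.1
      exact hdis z hz (Finset.mem_union_right _ (hCsubt' c hc' hz))
  have hBCdisj : Disjoint B C := by
    rw [Finset.disjoint_left]
    intro b hb hb'
    obtain ⟨z, hz⟩ := (hB1 b hb).1.1
    exact hCdisjt b hb' z hz (hBsubt b hb hz)
  have hRcard : R.card = Fintype.card V - 1 := by
    rw [hR, Finset.card_union_of_disjoint, Finset.card_union_of_disjoint hABdisj]
    · have hUcard : U.card = t.card + (t' \ t).card := by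
        rw [hU, ← Finset.union_sdiff_self_eq_union]
        exact Finset.card_union_of_disjoint (Finset.disjoint_sdiff)
      have e1 : B.card = t.card - 1 := by rw [hB3, Finset.card_erase_of_mem hvt]
      have e2 : C.card = (t' \ t).card - 1 := by
        rw [hC3, Finset.card_erase_of_mem (Finset.mem_sdiff.mpr ⟨hv't', hv'nt⟩)]
      have e3 : A.card = Fintype.card V - U.card + 1 := by rw [hAcard, Finset.card_univ]
      have e4 : U.card ≤ Fintype.card V := le_trans (Finset.card_le_univ U)
        (le_of_eq Finset.card_univ)
      have e5 : 1 ≤ t.card := Finset.card_pos.mpr ht.1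
      have e6 : 1 ≤ (t' \ t).card := Finset.card_pos.mpr ⟨v', Finset.mem_sdiff.mpr ⟨hv't', hv'nt⟩⟩
      omega
    · rw [Finset.disjoint_union_left]
      exact ⟨hACdisj, hBCdisj⟩
  have hcardT : (insert t R).card = Fintype.card V := by
    rw [Finset.card_insert_of_notMem htnotR, hRcard]
    have : 1 ≤ Fintype.card V := Fintype.card_pos_iff.mpr ⟨Classical.choice ⟨v⟩⟩
    omega
  have hcardT' : (insert t' R).card = Fintype.card V := by
    rw [Finset.card_insert_of_notMem ht'notR, hRcard]
    have : 1 ≤ Fintype.card V := Fintype.card_pos_iff.mpr ⟨Classical.choice ⟨v⟩⟩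
    omega
  have hmaxT : IsMaxTubing G (insert t R) :=
    tubing_max_of_card (htubingT t ht hRt) hcardT
  have hmaxT' : IsMaxTubing G (insert t' R) :=
    tubing_max_of_card (htubingT t' ht' hRt') hcardT'
  refine ⟨fun h => hvnt' (h ▸ hvt), insert t R, insert t' R, hmaxT, hmaxT',
    Finset.mem_insert_self t R, Finset.mem_insert_self t' R, ?_⟩
  rw [Finset.erase_insert htnotR, Finset.erase_insert ht'notR]


theorem stmt11 (G : SimpleGraph V) (t t' : Finset V)
    (ht : IsTube G t) (ht' : IsTube G t') :
    ExchangeableT G t t' ↔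
      ((∃! v, v ∈ t \ t' ∧ NbrOf G t' v) ∧ (∃! v', v' ∈ t' \ t ∧ NbrOf G t v')) := by
  constructor
  · rintro ⟨hne, T, T', hmT, hmT', htT, ht'T', he⟩
    exact ⟨forward_half hmT' hmT ht'T' htT hne.symm he.symm,
      forward_half hmT hmT' htT ht'T' hne he⟩
  · rintro ⟨h1, h2⟩
    exact backward_dir ht ht' h1 h2
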